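/- arXiv:2310.09961 — 2 statements merged into one kernel-verified Lean document; each statement's English description precedes it below -/
import Mathlib

section
/- (Additivity of restricted contributions.) If X and Y are independent random vectors, then L^r_T(X) + L^r_T(Y) = L^r_T(X, Y), where L^r_T(Z) = Var(T) − inf over additive square-integrable predictors h(Z) = Σ h_i(Z_i) of Var(T − h(Z)). -/
open MeasureTheory ProbabilityTheory

/-- The set of additive (GAM) square-integrable predictors built from the family of
features `Z i`. -/
def addPreds {Ω ι : Type*} {_ : MeasurableSpace Ω} [Fintype ι] (μ : Measure Ω)
    (Z : ι → Ω → ℝ) : Set (Ω → ℝ) :=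
  {h | ∃ f : ι → ℝ → ℝ, (∀ i, Measurable (f i) ∧ MemLp (fun ω => f i (Z i ω)) 2 μ) ∧
    h = fun ω => ∑ i, f i (Z i ω)}

/-- The restricted (GAM) variance reduction
`L^r_T(Z) = Var(T) - inf { Var(T - h) : h additive predictor from Z }`. -/
noncomputable def Lr {Ω ι : Type*} {_ : MeasurableSpace Ω} [Fintype ι] (μ : Measure Ω)
    (T : Ω → ℝ) (Z : ι → Ω → ℝ) : ℝ :=
  ProbabilityTheory.variance T μ -
    sInf ((fun h => ProbabilityTheory.variance (fun ω => T ω - h ω) μ) '' addPreds μ Z)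

private lemma integrable_mul_of_memL2 {Ω : Type*} {mΩ : MeasurableSpace Ω} {μ : Measure Ω}
    {a b : Ω → ℝ} (ha : MemLp a 2 μ) (hb : MemLp b 2 μ) :
    Integrable (fun ω => a ω * b ω) μ := by
  have h : (fun ω => a ω * b ω)
      = fun ω => ((a ω + b ω) ^ 2 - a ω ^ 2 - b ω ^ 2) / 2 := by
    funext ω; ring
  rw [h]
  exact (((ha.add hb).integrable_sq.sub ha.integrable_sq).sub hb.integrable_sq).div_const 2

private lemma var_sub {Ω : Type*} {mΩ : MeasurableSpace Ω} {μ : Measure Ω}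
    [IsProbabilityMeasure μ] {a b : Ω → ℝ} (ha : MemLp a 2 μ) (hb : MemLp b 2 μ) :
    variance (fun ω => a ω - b ω) μ
      = (∫ ω, a ω ^ 2 ∂μ) - 2 * (∫ ω, a ω * b ω ∂μ) + (∫ ω, b ω ^ 2 ∂μ)
        - ((∫ ω, a ω ∂μ) - ∫ ω, b ω ∂μ) ^ 2 := by
  have hab : Integrable (fun ω => a ω * b ω) μ := integrable_mul_of_memL2 ha hb
  rw [variance_eq_sub (show MemLp (fun ω => a ω - b ω) 2 μ from ha.sub hb)]
  simp only [Pi.pow_apply]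
  have h1 : ∀ ω, (a ω - b ω) ^ 2 = a ω ^ 2 - 2 * (a ω * b ω) + b ω ^ 2 := fun ω => by ring
  simp_rw [h1]
  have hI2 : Integrable (fun ω => 2 * (a ω * b ω)) μ := hab.const_mul 2
  have hI1 : Integrable (fun ω => a ω ^ 2 - 2 * (a ω * b ω)) μ := ha.integrable_sq.sub hI2
  rw [integral_add hI1 hb.integrable_sq,
    integral_sub ha.integrable_sq hI2, integral_const_mul 2 _,
    integral_sub (ha.integrable one_le_two) (hb.integrable one_le_two)]

private lemma var_key {Ω : Type*} {mΩ : MeasurableSpace Ω} {μ : Measure Ω}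
    [IsProbabilityMeasure μ] {T F G : Ω → ℝ} (hT : MemLp T 2 μ) (hF : MemLp F 2 μ)
    (hG : MemLp G 2 μ) (hFG : IndepFun F G μ) :
    variance (fun ω => T ω - F ω) μ + variance (fun ω => T ω - G ω) μ
      = variance T μ + variance (fun ω => T ω - (F ω + G ω)) μ := by
  have hind : ∫ ω, F ω * G ω ∂μ = (∫ ω, F ω ∂μ) * ∫ ω, G ω ∂μ :=
    hFG.integral_mul_eq_mul_integral hF.aestronglyMeasurable hG.aestronglyMeasurable
  have e1 := var_sub hT hF
  have e2 := var_sub hT hG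
  have e4 := var_sub hT (show MemLp (fun ω => F ω + G ω) 2 μ from hF.add hG)
  have e3 : variance T μ = (∫ ω, T ω ^ 2 ∂μ) - (∫ ω, T ω ∂μ) ^ 2 := variance_eq_sub hT
  -- expand the (F + G) integrals
  have hs2 : ∫ ω, T ω * (F ω + G ω) ∂μ
      = (∫ ω, T ω * F ω ∂μ) + ∫ ω, T ω * G ω ∂μ := by
    have : ∀ ω, T ω * (F ω + G ω) = T ω * F ω + T ω * G ω := fun ω => by ring
    simp_rw [this]
    exact integral_add (integrable_mul_of_memL2 hT hF) (integrable_mul_of_memL2 hT hG)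
  have hs1 : ∫ ω, (F ω + G ω) ^ 2 ∂μ
      = (∫ ω, F ω ^ 2 ∂μ) + 2 * ((∫ ω, F ω ∂μ) * ∫ ω, G ω ∂μ) + ∫ ω, G ω ^ 2 ∂μ := by
    have : ∀ ω, (F ω + G ω) ^ 2 = F ω ^ 2 + 2 * (F ω * G ω) + G ω ^ 2 := fun ω => by ring
    simp_rw [this]
    have hJ2 : Integrable (fun ω => 2 * (F ω * G ω)) μ :=
      (integrable_mul_of_memL2 hF hG).const_mul 2
    have hJ1 : Integrable (fun ω => F ω ^ 2 + 2 * (F ω * G ω)) μ := hF.integrable_sq.add hJ2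
    rw [integral_add hJ1 hG.integrable_sq, integral_add hF.integrable_sq hJ2,
      integral_const_mul 2 _, hind]
  have hs3 : ∫ ω, F ω + G ω ∂μ = (∫ ω, F ω ∂μ) + ∫ ω, G ω ∂μ :=
    integral_add (hF.integrable one_le_two) (hG.integrable one_le_two)
  rw [e1, e2, e3, e4, hs1, hs2, hs3]
  ring

/-- Additivity of restricted contributions: if the random vectors `X` and `Y` are
independent, then `L^r_T(X) + L^r_T(Y) = L^r_T(X, Y)`. -/
theorem restricted_variance_reduction_additive_of_indep
    {Ω : Type*} {m0 : MeasurableSpace Ω} (μ : Measure Ω) [IsProbabilityMeasure μ]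
    {n m : ℕ} (X : Fin n → Ω → ℝ) (Y : Fin m → Ω → ℝ)
    (hX : ∀ i, Measurable (X i)) (hY : ∀ j, Measurable (Y j))
    (hindep : IndepFun (fun ω i => X i ω) (fun ω j => Y j ω) μ)
    (T : Ω → ℝ) (hT : MemLp T 2 μ) :
    Lr μ T X + Lr μ T Y = Lr μ T (Sum.elim X Y) := by
  classical
  set V := ProbabilityTheory.variance T μ with hV
  set SX := (fun h => ProbabilityTheory.variance (fun ω => T ω - h ω) μ) '' addPreds μ X with hSX
  set SY := (fun h => ProbabilityTheory.variance (fun ω => T ω - h ω) μ) '' addPreds μ Y with hSY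
  set SXY := (fun h => ProbabilityTheory.variance (fun ω => T ω - h ω) μ) ''
    addPreds μ (Sum.elim X Y) with hSXY
  -- structural facts about additive predictors of X
  have factX : ∀ F ∈ addPreds μ X, MemLp F 2 μ ∧
      ∃ φ : (Fin n → ℝ) → ℝ, Measurable φ ∧ F = φ ∘ (fun ω i => X i ω) := by
    rintro F ⟨f, hf, rfl⟩
    refine ⟨memLp_finset_sum Finset.univ (fun i _ => (hf i).2), ?_⟩
    exact ⟨fun v => ∑ i, f i (v i),
      Finset.measurable_sum _ (fun i _ => (hf i).1.comp (measurable_pi_apply i)), rfl⟩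
  have factY : ∀ G ∈ addPreds μ Y, MemLp G 2 μ ∧
      ∃ ψ : (Fin m → ℝ) → ℝ, Measurable ψ ∧ G = ψ ∘ (fun ω j => Y j ω) := by
    rintro G ⟨g, hg, rfl⟩
    refine ⟨memLp_finset_sum Finset.univ (fun j _ => (hg j).2), ?_⟩
    exact ⟨fun v => ∑ j, g j (v j),
      Finset.measurable_sum _ (fun j _ => (hg j).1.comp (measurable_pi_apply j)), rfl⟩
  have factInd : ∀ F ∈ addPreds μ X, ∀ G ∈ addPreds μ Y, IndepFun F G μ := by
    intro F hF G hG
    obtain ⟨-, φ, hφ, hFφ⟩ := factX F hF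
    obtain ⟨-, ψ, hψ, hGψ⟩ := factY G hG
    rw [hFφ, hGψ]
    exact hindep.comp hφ hψ
  -- sum membership
  have memSum : ∀ F ∈ addPreds μ X, ∀ G ∈ addPreds μ Y,
      (fun ω => F ω + G ω) ∈ addPreds μ (Sum.elim X Y) := by
    rintro F ⟨f, hf, rfl⟩ G ⟨g, hg, rfl⟩
    refine ⟨Sum.elim f g, ?_, ?_⟩
    · rintro (i | j)
      · exact hf i
      · exact hg j
    · funext ω
      rw [← Finset.univ_disjSum_univ, Finset.sum_disjSum]
      rfl
  -- decomposition of additive predictors of (X, Y)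
  have decomp : ∀ h ∈ addPreds μ (Sum.elim X Y),
      ∃ F ∈ addPreds μ X, ∃ G ∈ addPreds μ Y, h = fun ω => F ω + G ω := by
    rintro h ⟨f, hf, rfl⟩
    refine ⟨fun ω => ∑ i, f (Sum.inl i) (X i ω), ⟨fun i => f (Sum.inl i),
        fun i => hf (Sum.inl i), rfl⟩,
      fun ω => ∑ j, f (Sum.inr j) (Y j ω), ⟨fun j => f (Sum.inr j),
        fun j => hf (Sum.inr j), rfl⟩, ?_⟩
    funext ω
    rw [← Finset.univ_disjSum_univ, Finset.sum_disjSum]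
    rfl
  -- nonempty and bounded below
  have zeroMem : ∀ {ι : Type} [inst : Fintype ι] (Z : ι → Ω → ℝ),
      (fun _ : Ω => ∑ _i : ι, (0:ℝ)) ∈ addPreds μ Z := by
    intro ι _ Z
    exact ⟨fun _ _ => 0, fun i => ⟨measurable_const, memLp_const 0⟩, rfl⟩
  have hSXne : SX.Nonempty := ⟨_, Set.mem_image_of_mem _ (zeroMem X)⟩
  have hSYne : SY.Nonempty := ⟨_, Set.mem_image_of_mem _ (zeroMem Y)⟩
  have hSXYne : SXY.Nonempty := ⟨_, Set.mem_image_of_mem _ (zeroMem (Sum.elim X Y))⟩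
  have hSXbdd : BddBelow SX := ⟨0, by rintro v ⟨h, -, rfl⟩; exact variance_nonneg _ μ⟩
  have hSYbdd : BddBelow SY := ⟨0, by rintro v ⟨h, -, rfl⟩; exact variance_nonneg _ μ⟩
  have hSXYbdd : BddBelow SXY := ⟨0, by rintro v ⟨h, -, rfl⟩; exact variance_nonneg _ μ⟩
  -- key pointwise inequality
  have d1 : ∀ F ∈ addPreds μ X, ∀ G ∈ addPreds μ Y,
      sInf SXY ≤ variance (fun ω => T ω - F ω) μ + variance (fun ω => T ω - G ω) μ - V := by
    intro F hF G hG
    have key := var_key hT (factX F hF).1 (factY G hG).1 (factInd F hF G hG)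
    have hle : sInf SXY ≤ variance (fun ω => T ω - (F ω + G ω)) μ :=
      csInf_le hSXYbdd ⟨_, memSum F hF G hG, rfl⟩
    linarith [key, hle, hV]
  -- the main sInf identity
  have main : sInf SXY = sInf SX + sInf SY - V := by
    apply le_antisymm
    · have h1 : sInf SXY + V - sInf SY ≤ sInf SX := by
        apply le_csInf hSXne
        rintro u ⟨F, hF, rfl⟩
        have h2 : sInf SXY + V - variance (fun ω => T ω - F ω) μ ≤ sInf SY := by
          apply le_csInf hSYne
          rintro v ⟨G, hG, rfl⟩
          have := d1 F hF G hG
          linarith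
        linarith
      linarith
    · apply le_csInf hSXYne
      rintro w ⟨h, hh, rfl⟩
      obtain ⟨F, hF, G, hG, rfl⟩ := decomp h hh
      have key := var_key hT (factX F hF).1 (factY G hG).1 (factInd F hF G hG)
      have lX : sInf SX ≤ variance (fun ω => T ω - F ω) μ := csInf_le hSXbdd ⟨F, hF, rfl⟩
      have lY : sInf SY ≤ variance (fun ω => T ω - G ω) μ := csInf_le hSYbdd ⟨G, hG, rfl⟩
      show sInf SX + sInf SY - V ≤ variance (fun ω => T ω - (F ω + G ω)) μ
      linarith [key, lX, lY, hV]
  simp only [Lr, ← hSX, ← hSY, ← hSXY, ← hV]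
  rw [main]
  ring
end

section
/- (Upper bound on restricted interaction.) Suppose the restricted conditional expectation E^r[T | X₁,…,Xₙ, Y₁,…,Y_m] decomposes as F_X(X) + F_Y(Y) with Cov(F_X(X), F_Y(Y)) finite, where F_X is additive in the Xᵢ and F_Y additive in the Y_j. Then W^r_T(X; Y) := L^r_T(X, Y) − L^r_T(X) − L^r_T(Y) ≤ −2 Cov(F_X(X), F_Y(Y)). In particular, if Cov(F_X(X), F_Y(Y)) ≥ 0 then the interaction W^r_T(X; Y) is non-positive. -/
open MeasureTheory ProbabilityTheory

/-- Covariance of two real random variables. -/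
noncomputable def cov {Ω : Type*} {_ : MeasurableSpace Ω} (μ : Measure Ω) (f g : Ω → ℝ) : ℝ :=
  ∫ ω, (f ω - ∫ x, f x ∂μ) * (g ω - ∫ x, g x ∂μ) ∂μ

lemma memLp_of_addPreds {Ω ι : Type*} {_ : MeasurableSpace Ω} [Fintype ι] {μ : Measure Ω}
    {Z : ι → Ω → ℝ} {F : Ω → ℝ} (h : F ∈ addPreds μ Z) : MemLp F 2 μ := by
  obtain ⟨f, hf, rfl⟩ := h
  exact memLp_finset_sum Finset.univ (fun i _ => (hf i).2)

lemma Lr_ge {Ω ι : Type*} {_ : MeasurableSpace Ω} [Fintype ι] (μ : Measure Ω)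
    (T : Ω → ℝ) (Z : ι → Ω → ℝ) {F : Ω → ℝ} (h : F ∈ addPreds μ Z) :
    ProbabilityTheory.variance T μ - ProbabilityTheory.variance (fun ω => T ω - F ω) μ
      ≤ Lr μ T Z := by
  have hbdd : BddBelow ((fun h => ProbabilityTheory.variance (fun ω => T ω - h ω) μ)
      '' addPreds μ Z) := by
    refine ⟨0, ?_⟩
    rintro x ⟨g, -, rfl⟩
    exact variance_nonneg _ μ
  have hmem : ProbabilityTheory.variance (fun ω => T ω - F ω) μ ∈
      ((fun h => ProbabilityTheory.variance (fun ω => T ω - h ω) μ) '' addPreds μ Z) :=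
    ⟨F, h, rfl⟩
  have := csInf_le hbdd hmem
  unfold Lr
  linarith

/-- Upper bound on the restricted interaction: if the restricted conditional expectation
`E^r[T | X, Y]` decomposes as `F_X(X) + F_Y(Y)` with `F_X` additive in the `Xᵢ` and `F_Y`
additive in the `Y_j` (i.e. `F_X + F_Y` attains the restricted minimum for the joint family),
then `W^r_T(X;Y) = L^r_T(X,Y) - L^r_T(X) - L^r_T(Y) ≤ -2 Cov(F_X, F_Y)`; in particular if
`Cov(F_X, F_Y) ≥ 0` then the interaction is non-positive. -/
theorem restricted_interaction_upper_bound
    {Ω : Type*} {m0 : MeasurableSpace Ω} (μ : Measure Ω) [IsProbabilityMeasure μ]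
    {n m : ℕ} (X : Fin n → Ω → ℝ) (Y : Fin m → Ω → ℝ)
    (hX : ∀ i, Measurable (X i)) (hY : ∀ j, Measurable (Y j))
    (T : Ω → ℝ) (hT : MemLp T 2 μ)
    (FX FY : Ω → ℝ) (hFX : FX ∈ addPreds μ X) (hFY : FY ∈ addPreds μ Y)
    (hmin : Lr μ T (Sum.elim X Y)
      = ProbabilityTheory.variance T μ
        - ProbabilityTheory.variance (fun ω => T ω - (FX ω + FY ω)) μ) :
    Lr μ T (Sum.elim X Y) - Lr μ T X - Lr μ T Y ≤ -2 * cov μ FX FY ∧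
    (0 ≤ cov μ FX FY → Lr μ T (Sum.elim X Y) - Lr μ T X - Lr μ T Y ≤ 0) := by
  have hFX2 : MemLp FX 2 μ := memLp_of_addPreds hFX
  have hFY2 : MemLp FY 2 μ := memLp_of_addPreds hFY
  have hTi : Integrable T μ := hT.integrable one_le_two
  have hXi : Integrable FX μ := hFX2.integrable one_le_two
  have hYi : Integrable FY μ := hFY2.integrable one_le_two
  set mT := ∫ x, T x ∂μ with hmT
  set mX := ∫ x, FX x ∂μ with hmX
  set mY := ∫ x, FY x ∂μ with hmY
  -- centered functions
  set a : Ω → ℝ := fun ω => T ω - mT with ha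
  set b : Ω → ℝ := fun ω => FX ω - mX with hb
  set c : Ω → ℝ := fun ω => FY ω - mY with hc
  have ha2 : MemLp a 2 μ := hT.sub (memLp_const mT)
  have hb2 : MemLp b 2 μ := hFX2.sub (memLp_const mX)
  have hc2 : MemLp c 2 μ := hFY2.sub (memLp_const mY)
  -- variance formulas
  have eT : variance T μ = ∫ ω, (a ω)^2 ∂μ := variance_eq_integral hT.aestronglyMeasurable.aemeasurable
  have eX : variance (fun ω => T ω - FX ω) μ = ∫ ω, (a ω - b ω)^2 ∂μ := by
    rw [show (fun ω => T ω - FX ω) = T - FX from rfl, variance_eq_integral (hT.sub hFX2).aestronglyMeasurable.aemeasurable]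
    simp only [Pi.sub_apply]
    have : ∫ x, T x - FX x ∂μ = mT - mX := integral_sub hTi hXi
    rw [this]
    congr 1; funext ω
    simp only [ha, hb, hc]; ring
  have eY : variance (fun ω => T ω - FY ω) μ = ∫ ω, (a ω - c ω)^2 ∂μ := by
    rw [show (fun ω => T ω - FY ω) = T - FY from rfl, variance_eq_integral (hT.sub hFY2).aestronglyMeasurable.aemeasurable]
    simp only [Pi.sub_apply]
    have : ∫ x, T x - FY x ∂μ = mT - mY := integral_sub hTi hYi
    rw [this]
    congr 1; funext ω
    simp only [ha, hb, hc]; ring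
  have eXY : variance (fun ω => T ω - (FX ω + FY ω)) μ
      = ∫ ω, (a ω - b ω - c ω)^2 ∂μ := by
    rw [show (fun ω => T ω - (FX ω + FY ω)) = T - (FX + FY) from rfl,
      variance_eq_integral (hT.sub (hFX2.add hFY2)).aestronglyMeasurable.aemeasurable]
    simp only [Pi.sub_apply, Pi.add_apply]
    have : ∫ x, T x - (FX x + FY x) ∂μ = mT - (mX + mY) := by
      have h := integral_sub hTi (hXi.add hYi)
      simp only [Pi.add_apply] at h
      rw [h, integral_add hXi hYi]
    rw [this]
    congr 1; funext ω
    simp only [ha, hb, hc]; ring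
  -- integrability of squares and product
  have I1 : Integrable (fun ω => (a ω - b ω)^2) μ := (ha2.sub hb2).integrable_sq
  have I2 : Integrable (fun ω => (a ω - c ω)^2) μ := (ha2.sub hc2).integrable_sq
  have Ia : Integrable (fun ω => (a ω)^2) μ := ha2.integrable_sq
  have Ib : Integrable (fun ω => (b ω)^2) μ := hb2.integrable_sq
  have Ic : Integrable (fun ω => (c ω)^2) μ := hc2.integrable_sq
  have Ibc' : Integrable (fun ω => (b ω + c ω)^2) μ := (hb2.add hc2).integrable_sq
  have I3 : Integrable (fun ω => (a ω - b ω - c ω)^2) μ :=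
    ((ha2.sub hb2).sub hc2).integrable_sq
  have Ibc : Integrable (fun ω => b ω * c ω) μ := by
    have h' : Integrable (fun ω => (((b ω + c ω)^2 - (b ω)^2) - (c ω)^2) / 2) μ :=
      ((Ibc'.sub Ib).sub Ic).div_const 2
    convert h' using 1
    funext ω; ring
  have hcov : cov μ FX FY = ∫ ω, b ω * c ω ∂μ := rfl
  -- key identity
  have key : variance (fun ω => T ω - FX ω) μ + variance (fun ω => T ω - FY ω) μ
      - variance T μ - variance (fun ω => T ω - (FX ω + FY ω)) μ
      = -2 * cov μ FX FY := by
    rw [eT, eX, eY, eXY, hcov]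
    have h0 : ∫ ω, ((a ω - b ω)^2 + (a ω - c ω)^2 - (a ω)^2 - (a ω - b ω - c ω)^2) ∂μ
        = ∫ ω, (-2 : ℝ) * (b ω * c ω) ∂μ := by
      congr 1; funext ω; ring
    have h1 : ∫ ω, ((a ω - b ω)^2 + (a ω - c ω)^2 - (a ω)^2 - (a ω - b ω - c ω)^2) ∂μ
        = (∫ ω, ((a ω - b ω)^2 + (a ω - c ω)^2 - (a ω)^2) ∂μ)
          - ∫ ω, (a ω - b ω - c ω)^2 ∂μ :=
      integral_sub ((I1.add I2).sub Ia) I3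
    have h2 : ∫ ω, ((a ω - b ω)^2 + (a ω - c ω)^2 - (a ω)^2) ∂μ
        = (∫ ω, ((a ω - b ω)^2 + (a ω - c ω)^2) ∂μ) - ∫ ω, (a ω)^2 ∂μ :=
      integral_sub (I1.add I2) Ia
    have h3 : ∫ ω, ((a ω - b ω)^2 + (a ω - c ω)^2) ∂μ
        = (∫ ω, (a ω - b ω)^2 ∂μ) + ∫ ω, (a ω - c ω)^2 ∂μ :=
      integral_add I1 I2
    have h4 : ∫ ω, (-2 : ℝ) * (b ω * c ω) ∂μ = -2 * ∫ ω, b ω * c ω ∂μ :=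
      integral_const_mul _ _
    linarith
  have hLX := Lr_ge μ T X hFX
  have hLY := Lr_ge μ T Y hFY
  constructor
  · linarith
  · intro hge; linarith
end
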